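/- arXiv:1804.05441 — 3 statements merged into one kernel-verified Lean document; each statement's English description precedes it below -/
import Mathlib

section
/- Let h ≥ 1 be a natural number. Suppose that for each u ∈ V we are given an h-hop SSSP tree rooted at u, i.e. a set R_u ⊆ V with u ∈ R_u and a parent function par_u : R_u → R_u with par_u(u) = u such that: every v ∈ R_u reaches u by iterating par_u; the number d_u(v) of parent-iterations needed to go from v to u satisfies d_u(v) ≤ h; the tree path from u to v (the reversal of the sequence v, par_u(v), par_u²(v), …, u) is a walk from u to v whose weight equals δ_h(u,v); and R_u contains every v ∈ V with δ_h(u,v) < ∞. Suppose Q ⊆ V is a blocker set for this collection of trees, i.e. for every u ∈ V and every v ∈ R_u with d_u(v) = h, the tree path from u to v contains a vertex of Q. Then for all u, v ∈ V: δ(u,v) = min( δ_h(u,v), min_{c ∈ Q} ( δ_h(u,c) + δ(c,v) ) ). -/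
open scoped ENNReal BigOperators

/-- The weight of a walk, given as the list of vertices it visits (in order):
the sum of the edge weights of consecutive pairs. A single vertex has weight 0. -/
noncomputable def walkWeight {V : Type*} (w : V → V → ℝ≥0∞) (p : List V) : ℝ≥0∞ :=
  (List.zipWith w p p.tail).sum

/-- `p` is a walk from `u` to `v`: a nonempty list of vertices starting at `u`
and ending at `v`. -/
def IsWalk {V : Type*} (u v : V) (p : List V) : Prop :=
  p.head? = some u ∧ p.getLast? = some v

/-- Shortest-path distance: infimum of walk weights over all walks from `u` to `v`
(`∞` if there is no walk). -/
noncomputable def delta {V : Type*} (w : V → V → ℝ≥0∞) (u v : V) : ℝ≥0∞ :=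
  ⨅ p ∈ {p : List V | IsWalk u v p}, walkWeight w p

/-- `h`-hop shortest-path distance: infimum of walk weights over all walks from `u`
to `v` with at most `h` edges (`∞` if there is no such walk). -/
noncomputable def deltaH {V : Type*} (w : V → V → ℝ≥0∞) (h : ℕ) (u v : V) : ℝ≥0∞ :=
  ⨅ p ∈ {p : List V | IsWalk u v p ∧ p.length ≤ h + 1}, walkWeight w p

section helpers
variable {V : Type*} (w : V → V → ℝ≥0∞)

lemma walkWeight_cons_cons (x y : V) (l : List V) :
    walkWeight w (x :: y :: l) = w x y + walkWeight w (y :: l) := by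
  simp [walkWeight]

lemma walkWeight_split (p : List V) (c : V) (q : List V) :
    walkWeight w (p ++ c :: q) = walkWeight w (p ++ [c]) + walkWeight w (c :: q) := by
  induction p with
  | nil => simp [walkWeight]
  | cons x p ih =>
    cases p with
    | nil => simp [walkWeight_cons_cons, walkWeight]
    | cons y p' =>
      simp only [List.cons_append, walkWeight_cons_cons]
      rw [← List.cons_append, ← List.cons_append, ih, add_assoc]

lemma delta_le_walkWeight {u v : V} {p : List V} (hp : IsWalk u v p) :
    delta w u v ≤ walkWeight w p :=
  iInf₂_le p hp

lemma deltaH_le_walkWeight {h : ℕ} {u v : V} {p : List V} (hp : IsWalk u v p)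
    (hlen : p.length ≤ h + 1) : deltaH w h u v ≤ walkWeight w p :=
  iInf₂_le p ⟨hp, hlen⟩

lemma delta_le_deltaH (h : ℕ) (u v : V) : delta w u v ≤ deltaH w h u v :=
  le_iInf₂ fun p hp => delta_le_walkWeight w hp.1

/-- concatenating two walks -/
lemma walk_concat {u c v : V} {p q : List V} (hp : IsWalk u c p) (hq : IsWalk c v q) :
    IsWalk u v (p ++ q.tail) ∧
      walkWeight w (p ++ q.tail) = walkWeight w p + walkWeight w q := by
  have hqeq : q = c :: q.tail := List.eq_cons_of_mem_head? hq.1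
  have hpne : p ≠ [] := by rintro rfl; simp [IsWalk] at hp
  have hpeq : p = p.dropLast ++ [c] := by
    have h1 : p.getLast hpne = c := by
      have := hp.2; rw [List.getLast?_eq_getLast hpne] at this; exact Option.some_inj.mp this
    conv_lhs => rw [← List.dropLast_append_getLast hpne, h1]
  constructor
  · constructor
    · rw [List.head?_append_of_ne_nil _ hpne, hp.1]
    · rw [hpeq, List.append_assoc, List.singleton_append,
        List.getLast?_append_cons, ← hqeq, hq.2]
  · conv_lhs => rw [hpeq, List.append_assoc, List.singleton_append, walkWeight_split]
    rw [← hpeq, ← hqeq]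

lemma delta_triangle (h : ℕ) (u c v : V) :
    delta w u v ≤ deltaH w h u c + delta w c v := by
  have key : ∀ p ∈ {p : List V | IsWalk u c p ∧ p.length ≤ h + 1},
      ∀ q ∈ {q : List V | IsWalk c v q},
      delta w u v ≤ walkWeight w p + walkWeight w q := by
    intro p hp q hq
    obtain ⟨hw', hW'⟩ := walk_concat w hp.1 hq
    rw [← hW']
    exact delta_le_walkWeight w hw'
  calc delta w u v
      ≤ ⨅ p : {p : List V // IsWalk u c p ∧ p.length ≤ h + 1},
          ⨅ q : {q : List V // IsWalk c v q},
          (walkWeight w p.1 + walkWeight w q.1) :=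
        le_iInf fun p => le_iInf fun q => key p.1 p.2 q.1 q.2
    _ = deltaH w h u c + delta w c v := by
        rw [deltaH, delta, iInf_subtype', iInf_subtype']
        rw [ENNReal.iInf_add]
        exact iInf_congr fun p => ENNReal.add_iInf.symm

end helpers

/-- If `Q` is a blocker set for a collection of `h`-hop SSSP trees
(one rooted at each vertex `u`, with vertex set `R u`, parent pointers `par u`,
hop-lengths `d u`), then shortest-path distances satisfy
`δ(u,v) = min(δ_h(u,v), min_{c ∈ Q} (δ_h(u,c) + δ(c,v)))`. -/
theorem blocker_set_apsp_identity
    {V : Type*} [Fintype V] [Nonempty V]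
    (w : V → V → ℝ≥0∞) (h : ℕ) (hh : 1 ≤ h)
    (R : V → Set V) (par : V → V → V) (d : V → V → ℕ)
    -- `u ∈ R_u` and `par_u(u) = u`
    (hmemR : ∀ u : V, u ∈ R u)
    (hparRoot : ∀ u : V, par u u = u)
    -- `par_u` maps `R_u` into `R_u`
    (hparR : ∀ u : V, ∀ v ∈ R u, par u v ∈ R u)
    -- every `v ∈ R_u` reaches `u` by iterating `par_u`, and `d u v` is the number
    -- of parent-iterations needed to go from `v` to `u`
    (hreach : ∀ u : V, ∀ v ∈ R u, (par u)^[d u v] v = u)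
    (hdMin : ∀ u : V, ∀ v ∈ R u, ∀ k : ℕ, (par u)^[k] v = u → d u v ≤ k)
    (hdle : ∀ u : V, ∀ v ∈ R u, d u v ≤ h)
    -- the tree path from `u` to `v` (reversal of `v, par_u v, par_u² v, …, u`)
    -- is a walk from `u` to `v` of weight `δ_h(u,v)`
    (htreePath : ∀ u : V, ∀ v ∈ R u,
      IsWalk u v ((List.iterate (par u) v (d u v + 1)).reverse) ∧
      walkWeight w ((List.iterate (par u) v (d u v + 1)).reverse) = deltaH w h u v)
    -- `R_u` contains every `v` with `δ_h(u,v) < ∞`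
    (hRcover : ∀ u v : V, deltaH w h u v ≠ ⊤ → v ∈ R u)
    -- `Q` is a blocker set: every tree path of hop-length `h` contains a vertex of `Q`
    (Q : Finset V)
    (hQ : ∀ u : V, ∀ v ∈ R u, d u v = h →
      ∃ c ∈ Q, c ∈ (List.iterate (par u) v (d u v + 1)).reverse) :
    ∀ u v : V,
      delta w u v = min (deltaH w h u v) (⨅ c ∈ Q, deltaH w h u c + delta w c v) := by
  intro u v
  refine le_antisymm (le_min (delta_le_deltaH w h u v)
    (le_iInf₂ fun c _ => delta_triangle w h u c v)) ?_
  -- the hard direction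
  have main : ∀ n, ∀ p : List V, p.length ≤ n → IsWalk u v p →
      min (deltaH w h u v) (⨅ c ∈ Q, deltaH w h u c + delta w c v) ≤ walkWeight w p := by
    intro n
    induction n with
    | zero =>
      intro p hlen hwalk
      have : p = [] := List.length_eq_zero_iff.mp (Nat.le_zero.mp hlen)
      subst this
      simp [IsWalk] at hwalk
    | succ n ih =>
      intro p hlen hwalk
      by_cases hshort : p.length ≤ h + 1
      · exact (min_le_left _ _).trans (deltaH_le_walkWeight w hwalk hshort)
      push_neg at hshort
      by_cases htop : walkWeight w p = ⊤
      · rw [htop]; exact le_top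
      have hhp : h < p.length := by omega
      set v' := p[h]'hhp with hv'
      have hdropeq : p.drop h = v' :: p.drop (h + 1) := List.drop_eq_getElem_cons hhp
      have hpeq : p = p.take h ++ v' :: p.drop (h + 1) := by
        rw [← hdropeq, List.take_append_drop]
      have htake_ne : p.take h ≠ [] := by
        apply List.ne_nil_of_length_pos
        rw [List.length_take]
        omega
      -- prefix walk from u to v'
      have hhead1 : (p.take h ++ [v']).head? = some u := by
        rw [List.head?_append_of_ne_nil _ htake_ne]
        rw [← hwalk.1]
        conv_rhs => rw [hpeq]
        rw [List.head?_append_of_ne_nil _ htake_ne]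
      have hwalk1 : IsWalk u v' (p.take h ++ [v']) :=
        ⟨hhead1, by simp [List.getLast?_append_cons]⟩
      have hlen1 : (p.take h ++ [v']).length ≤ h + 1 := by
        simp [List.length_take]
      have hsplitW : walkWeight w p
          = walkWeight w (p.take h ++ [v']) + walkWeight w (p.drop h) := by
        conv_lhs => rw [hpeq, walkWeight_split]
        rw [← hdropeq]
      have hW1 : deltaH w h u v' ≤ walkWeight w (p.take h ++ [v']) :=
        deltaH_le_walkWeight w hwalk1 hlen1
      have hW1top : deltaH w h u v' ≠ ⊤ := by
        intro hcon
        apply htop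
        rw [hsplitW]
        have := hcon ▸ hW1
        simp [top_le_iff.mp this]
      have hvR : v' ∈ R u := hRcover u v' hW1top
      -- suffix walk from v' to v
      have hdrop_ne : p.drop h ≠ [] := by rw [hdropeq]; simp
      have hdrop_walk : IsWalk v' v (p.drop h) := by
        constructor
        · rw [hdropeq]; rfl
        · rw [← hwalk.2]
          conv_rhs => rw [← List.take_append_drop h p]
          rw [List.getLast?_append_of_ne_nil _ hdrop_ne]
      obtain ⟨htw, htwW⟩ := htreePath u v' hvR
      set t := (List.iterate (par u) v' (d u v' + 1)).reverse with ht
      have htlen : t.length = d u v' + 1 := by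
        rw [ht, List.length_reverse, List.length_iterate]
      by_cases hdh : d u v' = h
      · -- blocker case
        obtain ⟨c, hcQ, hct⟩ := hQ u v' hvR hdh
        rw [← ht] at hct
        obtain ⟨t1, t2, hteq⟩ := List.append_of_mem hct
        have ht1len : t1.length + 1 + t2.length = h + 1 := by
          rw [← hdh, ← htlen, hteq]; simp; omega
        have hheadc : (t1 ++ [c]).head? = some u := by
          have h1 := htw.1
          rw [hteq] at h1
          cases t1 with
          | nil => simpa using h1
          | cons a l =>
            rw [List.head?_append_of_ne_nil _ (by simp)] at h1 ⊢
            exact h1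
        have hwalkc : IsWalk u c (t1 ++ [c]) :=
          ⟨hheadc, by simp [List.getLast?_append_cons]⟩
        have h1 : deltaH w h u c ≤ walkWeight w (t1 ++ [c]) :=
          deltaH_le_walkWeight w hwalkc (by simp; omega)
        have hwalkc2 : IsWalk c v' (c :: t2) := by
          refine ⟨rfl, ?_⟩
          have h2 := htw.2
          rw [hteq, List.getLast?_append_cons] at h2
          exact h2
        obtain ⟨hcw, hcW⟩ := walk_concat w hwalkc2 hdrop_walk
        have h2 : delta w c v ≤ walkWeight w (c :: t2) + walkWeight w (p.drop h) := by
          rw [← hcW]; exact delta_le_walkWeight w hcw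
        have hsum : deltaH w h u c + delta w c v ≤ walkWeight w p := by
          calc deltaH w h u c + delta w c v
              ≤ walkWeight w (t1 ++ [c])
                + (walkWeight w (c :: t2) + walkWeight w (p.drop h)) :=
                add_le_add h1 h2
            _ = walkWeight w t + walkWeight w (p.drop h) := by
                rw [hteq]
                conv_rhs => rw [walkWeight_split]
                rw [add_assoc]
            _ = deltaH w h u v' + walkWeight w (p.drop h) := by rw [htwW]
            _ ≤ walkWeight w (p.take h ++ [v']) + walkWeight w (p.drop h) :=
                add_le_add hW1 le_rfl
            _ = walkWeight w p := hsplitW.symm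
        exact (min_le_right _ _).trans ((iInf₂_le c hcQ).trans hsum)
      · -- short tree path case: recurse on a shorter walk
        have hdlt : d u v' < h := lt_of_le_of_ne (hdle u v' hvR) hdh
        obtain ⟨hw', hW'⟩ := walk_concat w htw hdrop_walk
        have hlen' : (t ++ (p.drop h).tail).length ≤ n := by
          rw [List.length_append, htlen, List.length_tail, List.length_drop]
          omega
        refine (ih _ hlen' hw').trans ?_
        rw [hW', htwW, hsplitW]
        exact add_le_add hW1 le_rfl
  exact le_iInf₂ fun p hp => main p.length p le_rfl hp
end

section
/- Let V be a finite set with |V| = n ≥ 1, let h be a natural number with 1 ≤ h ≤ n, and let P_1, …, P_p (p ≥ 1) be subsets of V, each of size at least h. Then there exists a set Q ⊆ V with Q ∩ P_i ≠ ∅ for every i ∈ {1,…,p} and |Q| ≤ ⌊(n/h)·ln p⌋ + 1. -/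
lemma blocker_arith (n h m m' : ℕ) (hh : 1 ≤ h) (hhn : h ≤ n)
    (hm' : 1 ≤ m') (hle : n * m' ≤ (n - h) * m) (hn1 : 1 ≤ n) :
    ⌊(n / h : ℝ) * Real.log m'⌋₊ + 1 ≤ ⌊(n / h : ℝ) * Real.log m⌋₊ := by
  have hhn' : h < n := by
    rcases lt_or_eq_of_le hhn with hlt | hlt
    · exact hlt
    · subst hlt; simp at hle; omega
  have hm : 1 ≤ m := by
    rcases Nat.eq_zero_or_pos m with rfl | hm
    · simp at hle; omega
    · exact hm
  have hnR : (0:ℝ) < n := by exact_mod_cast hn1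
  have hhR : (0:ℝ) < h := by exact_mod_cast hh
  have hm'R : (1:ℝ) ≤ m' := by exact_mod_cast hm'
  have hcast : ((n:ℝ) - h) = ((n - h : ℕ) : ℝ) := by
    rw [Nat.cast_sub hhn]
  have hfrac : (0:ℝ) < ((n:ℝ) - h) / n := by
    apply div_pos _ hnR
    have : (h:ℝ) < n := by exact_mod_cast hhn'
    linarith
  have h1 : (m' : ℝ) ≤ ((n:ℝ) - h) / n * m := by
    rw [div_mul_eq_mul_div, le_div_iff₀ hnR]
    have : (n:ℝ) * m' ≤ ((n - h : ℕ) : ℝ) * m := by exact_mod_cast hle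
    rw [hcast]; linarith
  have h2 : Real.log m' ≤ Real.log (((n:ℝ) - h) / n) + Real.log m := by
    rw [← Real.log_mul (ne_of_gt hfrac) (by positivity : (m:ℝ) ≠ 0)]
    exact Real.log_le_log (by linarith) h1
  have h3 : Real.log (((n:ℝ) - h) / n) ≤ -(h / n : ℝ) := by
    have : ((n:ℝ) - h) / n - 1 = -(h/n) := by field_simp; ring
    linarith [Real.log_le_sub_one_of_pos hfrac]
  have key : (n / h : ℝ) * Real.log m' ≤ (n / h : ℝ) * Real.log m - 1 := by
    have hdiv : (0:ℝ) ≤ (n:ℝ)/h := by positivity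
    have heq : (n / h : ℝ) * (h / n) = 1 := by field_simp
    calc (n / h : ℝ) * Real.log m' ≤ (n/h:ℝ) * (Real.log m - h/n) := by
          have : Real.log m' ≤ Real.log m - h/n := by linarith
          exact mul_le_mul_of_nonneg_left this hdiv
      _ = (n/h:ℝ) * Real.log m - 1 := by rw [mul_sub, heq]
  have hy0 : (0:ℝ) ≤ (n / h : ℝ) * Real.log m' := by
    apply mul_nonneg (by positivity)
    exact Real.log_nonneg hm'R
  have hx1 : (1:ℝ) ≤ (n / h : ℝ) * Real.log m := by linarith
  have hfloor : ⌊(n / h : ℝ) * Real.log m'⌋₊ ≤ ⌊(n / h : ℝ) * Real.log m - 1⌋₊ :=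
    Nat.floor_mono key
  have hsub : ⌊(n / h : ℝ) * Real.log m - 1⌋₊ = ⌊(n / h : ℝ) * Real.log m⌋₊ - 1 := by
    have := Nat.floor_sub_natCast ((n / h : ℝ) * Real.log m) 1
    simpa using this
  have hge : 1 ≤ ⌊(n / h : ℝ) * Real.log m⌋₊ := Nat.le_floor (by exact_mod_cast hx1)
  omega

lemma blocker_aux {V : Type*} [Fintype V] [DecidableEq V]
    (n : ℕ) (hn : Fintype.card V = n) (hn1 : 1 ≤ n)
    (h : ℕ) (hh : 1 ≤ h) (hhn : h ≤ n)
    {p : ℕ} (P : Fin p → Finset V) (hP : ∀ i : Fin p, h ≤ (P i).card)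
    (S : Finset (Fin p)) :
    ∃ Q : Finset V, (∀ i ∈ S, (Q ∩ P i).Nonempty) ∧
      Q.card ≤ (if S.Nonempty then ⌊(n / h : ℝ) * Real.log S.card⌋₊ + 1 else 0) := by
  induction S using Finset.strongInductionOn with
  | _ S IH =>
    rcases S.eq_empty_or_nonempty with rfl | hS
    · exact ⟨∅, by simp⟩
    · -- averaging: some vertex hits many sets
      have hVne : Nonempty V := by
        rw [← Fintype.card_pos_iff, hn]; omega
      have hsum1 : h * S.card ≤ ∑ i ∈ S, (P i).card := by
        have := Finset.card_nsmul_le_sum S (fun i => (P i).card) h (fun i _ => hP i)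
        simpa [smul_eq_mul, mul_comm] using this
      have hswap : ∑ i ∈ S, (P i).card
          = ∑ v : V, (S.filter (fun i => v ∈ P i)).card := by
        have : ∀ i : Fin p, (P i).card = ∑ v : V, if v ∈ P i then 1 else 0 := by
          intro i
          rw [← Finset.card_filter]
          congr 1
          simp [Finset.filter_univ_mem]
        simp only [this, Finset.card_filter]
        rw [Finset.sum_comm]
      obtain ⟨v₀, -, hv₀⟩ := Finset.exists_max_image Finset.univ
        (fun v => (S.filter (fun i => v ∈ P i)).card) Finset.univ_nonempty
      set c := (S.filter (fun i => v₀ ∈ P i)).card with hc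
      have hmax : ∑ i ∈ S, (P i).card ≤ n * c := by
        rw [hswap]
        calc ∑ v : V, (S.filter (fun i => v ∈ P i)).card
            ≤ ∑ _v : V, c := Finset.sum_le_sum (fun v _ => hv₀ v (Finset.mem_univ v))
          _ = n * c := by rw [Finset.sum_const, Finset.card_univ, hn, smul_eq_mul]
      have hhm : h * S.card ≤ n * c := le_trans hsum1 hmax
      have hc1 : 1 ≤ c := by
        by_contra hc0
        push_neg at hc0
        interval_cases c
        have : 1 ≤ h * S.card := Nat.one_le_iff_ne_zero.mpr (by
          have := hS.card_pos; positivity)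
        omega
      set S' := S.filter (fun i => v₀ ∉ P i) with hS'
      have hcards : c + S'.card = S.card := by
        rw [hc, hS']
        exact Finset.card_filter_add_card_filter_not _
      have hssub : S' ⊂ S := by
        rw [hS']
        refine Finset.filter_ssubset.mpr ?_
        obtain ⟨i, hi⟩ := Finset.card_pos.mp (by omega : 0 < c)
        rw [Finset.mem_filter] at hi
        exact ⟨i, hi.1, by simpa using hi.2⟩
      obtain ⟨Q', hQ'block, hQ'card⟩ := IH S' hssub
      refine ⟨insert v₀ Q', ?_, ?_⟩
      · intro i hi
        by_cases hvi : v₀ ∈ P i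
        · exact ⟨v₀, Finset.mem_inter.mpr ⟨Finset.mem_insert_self _ _, hvi⟩⟩
        · obtain ⟨w, hw⟩ := hQ'block i (by rw [hS']; exact Finset.mem_filter.mpr ⟨hi, hvi⟩)
          rw [Finset.mem_inter] at hw
          exact ⟨w, Finset.mem_inter.mpr ⟨Finset.mem_insert_of_mem hw.1, hw.2⟩⟩
      · simp only [hS, if_true]
        have hins : (insert v₀ Q').card ≤ Q'.card + 1 := Finset.card_insert_le _ _
        rcases S'.eq_empty_or_nonempty with hS'e | hS'ne
        · rw [hS'e] at hQ'card
          simp only [Finset.not_nonempty_empty, if_false] at hQ'card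
          omega
        · rw [if_pos hS'ne] at hQ'card
          have hm'1 : 1 ≤ S'.card := hS'ne.card_pos
          have hle : n * S'.card ≤ (n - h) * S.card := by
            have e1 : (n - h) * S.card + h * S.card = n * S.card := by
              rw [← Nat.add_mul]; congr 1; omega
            have e2 : n * S'.card + n * c = n * S.card := by
              rw [← Nat.mul_add]; congr 1; omega
            have : n * S'.card + h * S.card ≤ n * S.card := by
              calc n * S'.card + h * S.card ≤ n * S'.card + n * c :=
                    Nat.add_le_add_left hhm _
                _ = n * S.card := e2
            rw [← e1] at this
            exact Nat.le_of_add_le_add_right this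
          have := blocker_arith n h S.card S'.card hh hhn hm'1 hle hn1
          omega

/-- Given `p ≥ 1` subsets of an `n`-element set `V` (`1 ≤ h ≤ n`), each
of size at least `h`, there is a blocker set `Q` meeting every subset with
`|Q| ≤ ⌊(n/h)·ln p⌋ + 1`. -/
theorem exists_small_blocker_set
    {V : Type*} [Fintype V] [DecidableEq V]
    (n : ℕ) (hn : Fintype.card V = n) (hn1 : 1 ≤ n)
    (h : ℕ) (hh : 1 ≤ h) (hhn : h ≤ n)
    (p : ℕ) (hp : 1 ≤ p)
    (P : Fin p → Finset V) (hP : ∀ i : Fin p, h ≤ (P i).card) :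
    ∃ Q : Finset V, (∀ i : Fin p, (Q ∩ P i).Nonempty) ∧
      Q.card ≤ ⌊(n / h : ℝ) * Real.log p⌋₊ + 1 := by
  obtain ⟨Q, hQb, hQc⟩ := blocker_aux n hn hn1 h hh hhn P hP Finset.univ
  refine ⟨Q, fun i => hQb i (Finset.mem_univ i), ?_⟩
  have hne : (Finset.univ : Finset (Fin p)).Nonempty := by
    rw [← Finset.card_pos]
    simpa using (show 0 < p by omega)
  rw [if_pos hne] at hQc
  simpa using hQc
end

section
/- Assume w(u,v) ≠ 0 for all u, v ∈ V (all edge weights are positive). Let s ∈ V and let par : V → V be a function such that for every v ≠ s with δ(s,v) < ∞, δ(s, par(v)) + w(par(v), v) = δ(s,v). Then for every v ∈ V with δ(s,v) < ∞ there exists k ≤ n − 1 such that the k-fold iterate par^[k](v) = s, the vertices v, par(v), …, par^[k](v) are pairwise distinct, and the reversed sequence s = par^[k](v), …, par(v), v is a walk from s to v of weight δ(s,v). In other words, shortest-path parent pointers form an SSSP tree rooted at s whose tree paths realize the shortest-path distances. -/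
open scoped ENNReal BigOperators

lemma delta_le_walk {V : Type*} (w : V → V → ℝ≥0∞) {u v : V} {p : List V}
    (h : IsWalk u v p) : delta w u v ≤ walkWeight w p :=
  iInf₂_le p h

lemma delta_self {V : Type*} (w : V → V → ℝ≥0∞) (s : V) : delta w s s = 0 := by
  refine le_antisymm ?_ zero_le
  have := delta_le_walk w (u := s) (v := s) (p := [s]) ⟨rfl, rfl⟩
  simpa [walkWeight] using this

lemma walkWeight_cons_cons_s9 {V : Type*} (w : V → V → ℝ≥0∞) (a b : V) (t : List V) :
    walkWeight w (a :: b :: t) = w a b + walkWeight w (b :: t) := by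
  simp [walkWeight]

lemma walkWeight_concat {V : Type*} (w : V → V → ℝ≥0∞) :
    ∀ (l : List V) (x y : V), l.getLast? = some y →
      walkWeight w (l ++ [x]) = walkWeight w l + w y x := by
  intro l
  induction l with
  | nil => intro x y h; simp at h
  | cons a t ih =>
    intro x y h
    cases t with
    | nil =>
      simp only [List.getLast?_singleton, Option.some.injEq] at h
      subst h
      simp [walkWeight]
    | cons b t' =>
      have h' : (b :: t').getLast? = some y := by
        rw [List.getLast?_cons_cons] at h; exact h
      have := ih x y h'
      simp only [List.cons_append]
      rw [walkWeight_cons_cons_s9, walkWeight_cons_cons_s9]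
      rw [show walkWeight w (b :: (t' ++ [x])) = walkWeight w (b :: t') + w y x by
        simpa using this, add_assoc]

lemma walk_of_parent {V : Type*} (w : V → V → ℝ≥0∞) (s : V) (par : V → V)
    (hpar : ∀ v : V, v ≠ s → delta w s v ≠ ⊤ →
      delta w s (par v) + w (par v) v = delta w s v)
    (hfin : ∀ v : V, v ≠ s → delta w s v ≠ ⊤ → delta w s (par v) ≠ ⊤) :
    ∀ (m : ℕ) (v : V), delta w s v ≠ ⊤ → par^[m] v = s →
      (∀ j < m, par^[j] v ≠ s) →
      IsWalk s v ((List.iterate par v (m+1)).reverse) ∧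
      walkWeight w ((List.iterate par v (m+1)).reverse) = delta w s v := by
  intro m
  induction m with
  | zero =>
    intro v hv h0 _
    simp only [Function.iterate_zero_apply] at h0
    subst h0
    refine ⟨⟨rfl, rfl⟩, ?_⟩
    simp [walkWeight, delta_self, List.iterate]
  | succ m ih =>
    intro v hv hsucc hne
    have hvs : v ≠ s := by
      have := hne 0 (Nat.succ_pos _)
      simpa using this
    have heq := hpar v hvs hv
    have hpv : delta w s (par v) ≠ ⊤ := hfin v hvs hv
    have hit : par^[m] (par v) = s := by
      rw [← Function.iterate_succ_apply]; exact hsucc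
    have hne' : ∀ j < m, par^[j] (par v) ≠ s := by
      intro j hj
      rw [← Function.iterate_succ_apply]
      exact hne (j+1) (Nat.succ_lt_succ hj)
    obtain ⟨⟨hhead, hlast⟩, hwt⟩ := ih (par v) hpv hit hne'
    have hlist : (List.iterate par v (m+1+1)).reverse
        = (List.iterate par (par v) (m+1)).reverse ++ [v] := by
      rw [List.iterate]
      simp
    have hgl : ((List.iterate par (par v) (m+1)).reverse).getLast? = some (par v) := by
      rw [List.getLast?_reverse]
      rw [List.iterate]
      rfl
    constructor
    · constructor
      · rw [hlist, List.head?_append, hhead]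
        rfl
      · rw [hlist]
        exact List.getLast?_concat
    · rw [hlist, walkWeight_concat w _ v (par v) hgl, hwt, heq]

/-- With positive edge weights, shortest-path parent pointers form an
SSSP tree rooted at `s`: for every `v` with `δ(s,v) < ∞`, iterating `par` from `v`
reaches `s` in some `k ≤ n − 1` steps through pairwise distinct vertices, and the
reversed sequence `s = par^[k](v), …, par(v), v` is a walk from `s` to `v` of
weight `δ(s,v)`. -/
theorem parent_pointers_form_sssp_tree
    {V : Type*} [Fintype V] [Nonempty V]
    (w : V → V → ℝ≥0∞) (hw : ∀ u v : V, w u v ≠ 0)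
    (s : V) (par : V → V)
    (hpar : ∀ v : V, v ≠ s → delta w s v ≠ ⊤ →
      delta w s (par v) + w (par v) v = delta w s v) :
    ∀ v : V, delta w s v ≠ ⊤ →
      ∃ k : ℕ, k ≤ Fintype.card V - 1 ∧
        par^[k] v = s ∧
        (∀ i ≤ k, ∀ j ≤ k, par^[i] v = par^[j] v → i = j) ∧
        IsWalk s v ((List.iterate par v (k + 1)).reverse) ∧
        walkWeight w ((List.iterate par v (k + 1)).reverse) = delta w s v := by
  intro v hv
  classical
  have hfin : ∀ u : V, u ≠ s → delta w s u ≠ ⊤ → delta w s (par u) ≠ ⊤ := by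
    intro u hus hu htop
    rw [← hpar u hus hu] at hu
    exact hu (by simp [htop])
  have hlt : ∀ u : V, u ≠ s → delta w s u ≠ ⊤ → delta w s (par u) < delta w s u := by
    intro u hus hu
    calc delta w s (par u) < delta w s (par u) + w (par u) u :=
          ENNReal.lt_add_right (hfin u hus hu) (hw _ _)
      _ = delta w s u := hpar u hus hu
  have hC : ∀ i : ℕ, (∀ j < i, par^[j] v ≠ s) →
      delta w s (par^[i] v) ≠ ⊤ ∧
      ∀ j < i, delta w s (par^[i] v) < delta w s (par^[j] v) := by
    intro i
    induction i with
    | zero =>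
      intro _
      exact ⟨by simpa using hv, fun j hj => absurd hj (Nat.not_lt_zero j)⟩
    | succ i ih =>
      intro hne
      have hne' : ∀ j < i, par^[j] v ≠ s := fun j hj => hne j (hj.trans (Nat.lt_succ_self i))
      obtain ⟨hfi, hdec⟩ := ih hne'
      have hi_ne : par^[i] v ≠ s := hne i (Nat.lt_succ_self i)
      have step : delta w s (par^[i+1] v) < delta w s (par^[i] v) := by
        rw [Function.iterate_succ_apply']
        exact hlt _ hi_ne hfi
      have hfi' : delta w s (par^[i+1] v) ≠ ⊤ := by
        rw [Function.iterate_succ_apply']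
        exact hfin _ hi_ne hfi
      refine ⟨hfi', fun j hj => ?_⟩
      rcases Nat.lt_succ_iff_lt_or_eq.mp hj with hj | hj
      · exact step.trans (hdec j hj)
      · subst hj; exact step
  have hex : ∃ k, par^[k] v = s := by
    by_contra h
    push_neg at h
    have key : ∀ i j : ℕ, i < j → par^[i] v ≠ par^[j] v := by
      intro i j hij heq
      have := (hC j (fun m _ => h m)).2 i hij
      rw [← heq] at this
      exact lt_irrefl _ this
    have hinj : Function.Injective (fun i : Fin (Fintype.card V + 1) => par^[(i:ℕ)] v) := by
      intro i j hij
      rcases lt_trichotomy (i:ℕ) (j:ℕ) with h' | h' | h'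
      · exact absurd hij (key _ _ h')
      · exact Fin.ext h'
      · exact absurd hij.symm (key _ _ h')
    have hcard := Fintype.card_le_of_injective _ hinj
    simp only [Fintype.card_fin] at hcard
    omega
  set k := Nat.find hex with hkdef
  have hk : par^[k] v = s := Nat.find_spec hex
  have hmin : ∀ j < k, par^[j] v ≠ s := fun j hj => Nat.find_min hex hj
  have key : ∀ i j : ℕ, j ≤ k → i < j → par^[i] v ≠ par^[j] v := by
    intro i j hjk hij heq
    have := (hC j (fun m hm => hmin m (lt_of_lt_of_le hm hjk))).2 i hij
    rw [← heq] at this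
    exact lt_irrefl _ this
  have hinjk : ∀ i ≤ k, ∀ j ≤ k, par^[i] v = par^[j] v → i = j := by
    intro i hi j hj hij
    rcases lt_trichotomy i j with h' | h' | h'
    · exact absurd hij (key _ _ hj h')
    · exact h'
    · exact absurd hij.symm (key _ _ hi h')
  have hkcard : k ≤ Fintype.card V - 1 := by
    have hinj : Function.Injective (fun i : Fin (k + 1) => par^[(i:ℕ)] v) := by
      intro i j hij
      exact Fin.ext (hinjk _ (Nat.lt_succ_iff.mp i.isLt) _ (Nat.lt_succ_iff.mp j.isLt) hij)
    have hcard := Fintype.card_le_of_injective _ hinj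
    simp only [Fintype.card_fin] at hcard
    omega
  obtain ⟨hwalk, hwt⟩ := walk_of_parent w s par hpar hfin k v hv hk hmin
  exact ⟨k, hkcard, hk, hinjk, hwalk, hwt⟩
end
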